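/- arXiv:2601.07079 — 2 statements merged into one kernel-verified Lean document; each statement's English description precedes it below -/
import Mathlib

section
/- Let E(c,P) = {x ∈ ℝⁿ : (x−c)ᵀP⁻¹(x−c) ≤ 1} with P symmetric positive definite. For any symmetric positive definite matrices P₁, P₂ and centers c₁, c₂, and any scalar p > 0, the Minkowski sum E(c₁,P₁) ⊕ E(c₂,P₂) is contained in the ellipsoid E(c₁+c₂, (1+p⁻¹)P₁ + (1+p)P₂). -/
open Matrix Pointwise

set_option maxHeartbeats 1000000

/-- The ellipsoid set `E(c,P) = {x : (x-c)ᵀ P⁻¹ (x-c) ≤ 1}`. -/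
def ellipsoid {n : ℕ} (c : Fin n → ℝ) (P : Matrix (Fin n) (Fin n) ℝ) : Set (Fin n → ℝ) :=
  {x | (x - c) ⬝ᵥ (P⁻¹ *ᵥ (x - c)) ≤ 1}

lemma psd_nonneg {n : ℕ} {A : Matrix (Fin n) (Fin n) ℝ} (hA : A.PosSemidef)
    (x : Fin n → ℝ) : 0 ≤ x ⬝ᵥ A *ᵥ x := by
  simpa [star_trivial] using (posSemidef_iff_dotProduct_mulVec.mp hA).2 x

lemma sym_dot {n : ℕ} {A : Matrix (Fin n) (Fin n) ℝ} (hA : A.IsHermitian)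
    (x y : Fin n → ℝ) : y ⬝ᵥ A *ᵥ x = x ⬝ᵥ A *ᵥ y := by
  have hAT : Aᵀ = A := by
    have := hA.eq
    rwa [conjTranspose_eq_transpose_of_trivial] at this
  rw [dotProduct_mulVec, ← mulVec_transpose, hAT, dotProduct_comm]

lemma cs_psd {n : ℕ} {A : Matrix (Fin n) (Fin n) ℝ} (hA : A.PosSemidef)
    (x y : Fin n → ℝ) :
    (x ⬝ᵥ A *ᵥ y) ^ 2 ≤ (x ⬝ᵥ A *ᵥ x) * (y ⬝ᵥ A *ᵥ y) := by
  have key : ∀ t : ℝ,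
      0 ≤ (y ⬝ᵥ A *ᵥ y) * (t * t) + (2 * (x ⬝ᵥ A *ᵥ y)) * t + (x ⬝ᵥ A *ᵥ x) := by
    intro t
    have h := psd_nonneg hA (x + t • y)
    have hxy := sym_dot hA.1 x y
    have expand : (x + t • y) ⬝ᵥ A *ᵥ (x + t • y)
        = (y ⬝ᵥ A *ᵥ y) * (t * t) + (2 * (x ⬝ᵥ A *ᵥ y)) * t + (x ⬝ᵥ A *ᵥ x) := by
      simp only [mulVec_add, dotProduct_add, add_dotProduct, mulVec_smul,
        smul_dotProduct, dotProduct_smul, smul_eq_mul, hxy]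
      ring
    linarith [expand ▸ h]
  have hd := discrim_le_zero key
  rw [discrim] at hd
  nlinarith [hd]

lemma posDef_smul' {n : ℕ} {M : Matrix (Fin n) (Fin n) ℝ} (hM : M.PosDef)
    {c : ℝ} (hc : 0 < c) : (c • M).PosDef := by
  refine posDef_iff_dotProduct_mulVec.mpr ⟨?_, fun x hx => ?_⟩
  · rw [Matrix.IsHermitian, conjTranspose_smul, star_trivial, hM.1.eq]
  · rw [smul_mulVec, dotProduct_smul, smul_eq_mul]
    exact mul_pos hc (by simpa [star_trivial] using (posDef_iff_dotProduct_mulVec.mp hM).2 hx)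

/-- The Minkowski sum of two ellipsoids is contained in the ellipsoid
`E(c₁+c₂, (1+p⁻¹)P₁ + (1+p)P₂)` for any `p > 0`. -/
theorem minkowski_sum_subset_ellipsoid {n : ℕ}
    (c₁ c₂ : Fin n → ℝ) (P₁ P₂ : Matrix (Fin n) (Fin n) ℝ)
    (hP₁ : P₁.PosDef) (hP₂ : P₂.PosDef) (p : ℝ) (hp : 0 < p) :
    ellipsoid c₁ P₁ + ellipsoid c₂ P₂ ⊆
      ellipsoid (c₁ + c₂) ((1 + p⁻¹) • P₁ + (1 + p) • P₂) := by
  intro w hw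
  rw [Set.mem_add] at hw
  obtain ⟨a, ha, b, hb, rfl⟩ := hw
  have hp1 : (0:ℝ) < 1 + p⁻¹ := by positivity
  have hp2 : (0:ℝ) < 1 + p := by positivity
  set Q : Matrix (Fin n) (Fin n) ℝ := (1 + p⁻¹) • P₁ + (1 + p) • P₂ with hQdef
  have hQ : Q.PosDef := (posDef_smul' hP₁ hp1).add (posDef_smul' hP₂ hp2)
  set u : Fin n → ℝ := a - c₁ with hu
  set v : Fin n → ℝ := b - c₂ with hv
  have hα : u ⬝ᵥ P₁⁻¹ *ᵥ u ≤ 1 := ha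
  have hβ : v ⬝ᵥ P₂⁻¹ *ᵥ v ≤ 1 := hb
  have hα0 : 0 ≤ u ⬝ᵥ P₁⁻¹ *ᵥ u := psd_nonneg hP₁.inv.posSemidef u
  have hβ0 : 0 ≤ v ⬝ᵥ P₂⁻¹ *ᵥ v := psd_nonneg hP₂.inv.posSemidef v
  have hz : a + b - (c₁ + c₂) = u + v := by
    funext i; simp [hu, hv]; ring
  show (a + b - (c₁ + c₂)) ⬝ᵥ Q⁻¹ *ᵥ (a + b - (c₁ + c₂)) ≤ 1
  rw [hz]
  set z : Fin n → ℝ := u + v with hzdef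
  set x0 : Fin n → ℝ := Q⁻¹ *ᵥ z with hx0
  set t : ℝ := z ⬝ᵥ Q⁻¹ *ᵥ z with ht
  have ht0 : 0 ≤ t := psd_nonneg hQ.inv.posSemidef z
  have hQQ : Q * Q⁻¹ = 1 := mul_nonsing_inv Q hQ.det_pos.ne'.isUnit
  -- x0ᵀ Q x0 = t
  have htQ : x0 ⬝ᵥ Q *ᵥ x0 = t := by
    rw [ht, hx0, mulVec_mulVec, hQQ, one_mulVec, dotProduct_comm]
  -- abbreviations
  set a1 : ℝ := x0 ⬝ᵥ P₁ *ᵥ x0 with ha1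
  set b1 : ℝ := x0 ⬝ᵥ P₂ *ᵥ x0 with hb1
  have ha10 : 0 ≤ a1 := psd_nonneg hP₁.posSemidef x0
  have hb10 : 0 ≤ b1 := psd_nonneg hP₂.posSemidef x0
  have htexp : t = (1 + p⁻¹) * a1 + (1 + p) * b1 := by
    rw [← htQ, hQdef]
    simp [add_mulVec, smul_mulVec, dotProduct_add, dotProduct_smul, smul_eq_mul,
      ha1, hb1]
  -- Cauchy-Schwarz bounds
  have hP₁1 : P₁ * P₁⁻¹ = 1 := mul_nonsing_inv P₁ hP₁.det_pos.ne'.isUnit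
  have hP₂1 : P₂ * P₂⁻¹ = 1 := mul_nonsing_inv P₂ hP₂.det_pos.ne'.isUnit
  have hdu : (x0 ⬝ᵥ u) ^ 2 ≤ a1 := by
    have e1 : x0 ⬝ᵥ u = x0 ⬝ᵥ P₁ *ᵥ (P₁⁻¹ *ᵥ u) := by
      rw [mulVec_mulVec, hP₁1, one_mulVec]
    have e2 : (P₁⁻¹ *ᵥ u) ⬝ᵥ P₁ *ᵥ (P₁⁻¹ *ᵥ u) = u ⬝ᵥ P₁⁻¹ *ᵥ u := by
      rw [mulVec_mulVec, hP₁1, one_mulVec, dotProduct_comm]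
    have hcs := cs_psd hP₁.posSemidef x0 (P₁⁻¹ *ᵥ u)
    rw [e2, ← e1, ← ha1] at hcs
    nlinarith [hcs, hα, hα0, ha10]
  have hdv : (x0 ⬝ᵥ v) ^ 2 ≤ b1 := by
    have e1 : x0 ⬝ᵥ v = x0 ⬝ᵥ P₂ *ᵥ (P₂⁻¹ *ᵥ v) := by
      rw [mulVec_mulVec, hP₂1, one_mulVec]
    have e2 : (P₂⁻¹ *ᵥ v) ⬝ᵥ P₂ *ᵥ (P₂⁻¹ *ᵥ v) = v ⬝ᵥ P₂⁻¹ *ᵥ v := by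
      rw [mulVec_mulVec, hP₂1, one_mulVec, dotProduct_comm]
    have hcs := cs_psd hP₂.posSemidef x0 (P₂⁻¹ *ᵥ v)
    rw [e2, ← e1, ← hb1] at hcs
    nlinarith [hcs, hβ, hβ0, hb10]
  set s1 : ℝ := Real.sqrt a1 with hs1
  set s2 : ℝ := Real.sqrt b1 with hs2
  have hs10 : 0 ≤ s1 := Real.sqrt_nonneg _
  have hs20 : 0 ≤ s2 := Real.sqrt_nonneg _
  have hs1sq : s1 ^ 2 = a1 := Real.sq_sqrt ha10
  have hs2sq : s2 ^ 2 = b1 := Real.sq_sqrt hb10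
  have hu1 : x0 ⬝ᵥ u ≤ s1 := by
    calc x0 ⬝ᵥ u ≤ |x0 ⬝ᵥ u| := le_abs_self _
    _ = Real.sqrt ((x0 ⬝ᵥ u) ^ 2) := (Real.sqrt_sq_eq_abs _).symm
    _ ≤ s1 := Real.sqrt_le_sqrt hdu
  have hv1 : x0 ⬝ᵥ v ≤ s2 := by
    calc x0 ⬝ᵥ v ≤ |x0 ⬝ᵥ v| := le_abs_self _
    _ = Real.sqrt ((x0 ⬝ᵥ v) ^ 2) := (Real.sqrt_sq_eq_abs _).symm
    _ ≤ s2 := Real.sqrt_le_sqrt hdv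
  -- t = x0ᵀ z = x0ᵀu + x0ᵀv ≤ s1 + s2
  have hts : t ≤ s1 + s2 := by
    have : t = x0 ⬝ᵥ u + x0 ⬝ᵥ v := by
      rw [ht, dotProduct_comm, ← hx0, hzdef, dotProduct_add]
    linarith [this ▸ (add_le_add hu1 hv1)]
  -- AM-GM: 2 s1 s2 ≤ p⁻¹ s1² + p s2²
  have key2 : 2 * s1 * s2 ≤ p⁻¹ * s1 ^ 2 + p * s2 ^ 2 := by
    rw [← mul_le_mul_iff_right₀ hp]
    have e : p * (p⁻¹ * s1 ^ 2 + p * s2 ^ 2) = s1 ^ 2 + p ^ 2 * s2 ^ 2 := by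
      field_simp
    rw [e]
    nlinarith [sq_nonneg (s1 - p * s2)]
  -- (s1+s2)² ≤ t
  have hst : (s1 + s2) ^ 2 ≤ t := by
    rw [htexp]
    nlinarith [key2, hs1sq, hs2sq]
  -- conclude
  nlinarith [hts, hst, ht0, hs10, hs20,
    mul_nonneg ht0 (sub_nonneg.mpr hts),
    mul_nonneg (add_nonneg hs10 hs20) (sub_nonneg.mpr hts)]
end

section
/- Covering the intersection of two ellipsoids (fusion inequality): let Q₁, Q₂ be symmetric positive definite and a₁, a₂ ∈ ℝⁿ. For q > 0 define L = Q₁(Q₁ + q⁻¹Q₂)⁻¹, β = 1 + q − q(a₂−a₁)ᵀ(qQ₁+Q₂)⁻¹(a₂−a₁), a = a₁ + L(a₂−a₁), Q = β(I−L)Q₁. If β > 0, then for every x with (x−a₁)ᵀQ₁⁻¹(x−a₁) ≤ 1 and (x−a₂)ᵀQ₂⁻¹(x−a₂) ≤ 1, it holds that (x−a)ᵀQ⁻¹(x−a) ≤ 1. -/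
open Matrix

private theorem symm_dot {n : ℕ} (M : Matrix (Fin n) (Fin n) ℝ) (hM : Mᵀ = M) (a b : Fin n → ℝ) :
    a ⬝ᵥ (M *ᵥ b) = b ⬝ᵥ (M *ᵥ a) := by
  conv_lhs => rw [dotProduct_mulVec, ← hM, vecMul_transpose]
  exact dotProduct_comm _ _

private theorem trans_dot {n : ℕ} (M : Matrix (Fin n) (Fin n) ℝ) (a b : Fin n → ℝ) :
    a ⬝ᵥ (Mᵀ *ᵥ b) = (M *ᵥ a) ⬝ᵥ b := by
  rw [dotProduct_mulVec, vecMul_transpose]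

private theorem posdef_smul {n : ℕ} (Q : Matrix (Fin n) (Fin n) ℝ) (hQ : Q.PosDef) (c : ℝ)
    (hc : 0 < c) : (c • Q).PosDef := by
  refine ⟨by rw [IsHermitian, conjTranspose_smul, star_trivial, hQ.isHermitian.eq],
    fun x hx => ?_⟩
  simpa [Finsupp.mul_sum, mul_assoc, mul_left_comm] using smul_pos hc (hQ.2 hx)

/-- Covering the intersection of two ellipsoids (fusion inequality): with
`L = Q₁(Q₁ + q⁻¹Q₂)⁻¹`, `β = 1 + q − q(a₂−a₁)ᵀ(qQ₁+Q₂)⁻¹(a₂−a₁)`,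
`a = a₁ + L(a₂−a₁)` and `Q = β(I−L)Q₁`, if `β > 0` then every point of the
intersection of `E(a₁,Q₁)` and `E(a₂,Q₂)` lies in `E(a,Q)`. -/
theorem ellipsoid_fusion_inequality {n : ℕ}
    (Q₁ Q₂ : Matrix (Fin n) (Fin n) ℝ) (hQ₁ : Q₁.PosDef) (hQ₂ : Q₂.PosDef)
    (a₁ a₂ : Fin n → ℝ) (q : ℝ) (hq : 0 < q) :
    letI L : Matrix (Fin n) (Fin n) ℝ := Q₁ * (Q₁ + q⁻¹ • Q₂)⁻¹
    letI β : ℝ := 1 + q - q * ((a₂ - a₁) ⬝ᵥ ((q • Q₁ + Q₂)⁻¹ *ᵥ (a₂ - a₁)))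
    letI a : Fin n → ℝ := a₁ + L *ᵥ (a₂ - a₁)
    letI Q : Matrix (Fin n) (Fin n) ℝ := β • ((1 - L) * Q₁)
    0 < β →
      ∀ x : Fin n → ℝ,
        (x - a₁) ⬝ᵥ (Q₁⁻¹ *ᵥ (x - a₁)) ≤ 1 →
        (x - a₂) ⬝ᵥ (Q₂⁻¹ *ᵥ (x - a₂)) ≤ 1 →
        (x - a) ⬝ᵥ (Q⁻¹ *ᵥ (x - a)) ≤ 1 := by
  intro hβ x h1 h2
  have hQ1d : IsUnit Q₁.det := isUnit_iff_ne_zero.2 hQ₁.det_pos.ne'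
  have hQ2d : IsUnit Q₂.det := isUnit_iff_ne_zero.2 hQ₂.det_pos.ne'
  set A : Matrix (Fin n) (Fin n) ℝ := Q₁ + q⁻¹ • Q₂ with hA
  set L : Matrix (Fin n) (Fin n) ℝ := Q₁ * A⁻¹ with hL
  set P : Matrix (Fin n) (Fin n) ℝ := Q₂⁻¹ with hP
  set S : Matrix (Fin n) (Fin n) ℝ := Q₁⁻¹ + q • P with hS
  set d : Fin n → ℝ := a₂ - a₁ with hd
  set u : Fin n → ℝ := x - a₁ with hu
  clear_value A L P S d u
  -- positive definiteness / invertibility of A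
  have hApd : A.PosDef := by
    rw [hA]; exact hQ₁.add (posdef_smul Q₂ hQ₂ q⁻¹ (inv_pos.2 hq))
  have hAd : IsUnit A.det := isUnit_iff_ne_zero.2 hApd.det_pos.ne'
  -- symmetry facts
  have hQ1t : Q₁ᵀ = Q₁ := hQ₁.isHermitian.eq
  have hQ2t : Q₂ᵀ = Q₂ := hQ₂.isHermitian.eq
  have hAt : Aᵀ = A := hApd.isHermitian.eq
  have hAinvt : A⁻¹ᵀ = A⁻¹ := by rw [transpose_nonsing_inv, hAt]
  have hPt : Pᵀ = P := by rw [hP, transpose_nonsing_inv, hQ2t]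
  have hSt : Sᵀ = S := by
    rw [hS, transpose_add, transpose_smul, transpose_nonsing_inv, hQ1t, hPt]
  -- matrix identities
  have hAQ : A * (q • P) = q • (Q₁ * P) + 1 := by
    rw [hA, hP, add_mul, mul_smul_comm, smul_mul_assoc, mul_smul_comm, smul_smul,
      inv_mul_cancel₀ hq.ne', one_smul, mul_nonsing_inv _ hQ2d]
  have key1 : q • (A⁻¹ * (Q₁ * P)) = q • P - A⁻¹ :=
    calc q • (A⁻¹ * (Q₁ * P)) = A⁻¹ * (q • (Q₁ * P)) := (mul_smul_comm _ _ _).symm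
      _ = A⁻¹ * (A * (q • P) - 1) := by rw [hAQ, add_sub_cancel_right]
      _ = q • P - A⁻¹ := by rw [mul_sub, mul_one, nonsing_inv_mul_cancel_left _ _ hAd]
  have hSQ1 : S * Q₁ = 1 + q • (P * Q₁) := by
    rw [hS, add_mul, nonsing_inv_mul _ hQ1d, smul_mul_assoc]
  have hPA : (q • P) * A = 1 + q • (P * Q₁) := by
    rw [hA, hP, mul_add, smul_mul_assoc, mul_smul_comm, smul_mul_assoc, smul_smul,
      inv_mul_cancel₀ hq.ne', one_smul, nonsing_inv_mul _ hQ2d, add_comm]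
  have hSL : S * L = q • P := by
    rw [hL, ← mul_assoc, hSQ1, ← hPA, mul_nonsing_inv_cancel_right _ _ hAd]
  have hSM : S * ((1 - L) * Q₁) = 1 := by
    rw [sub_mul, one_mul, mul_sub, hSQ1, ← mul_assoc, hSL, smul_mul_assoc,
      add_sub_cancel_right]
  have hMd : IsUnit ((1 - L) * Q₁).det := isUnit_det_of_left_inverse hSM
  have hMinv : ((1 - L) * Q₁)⁻¹ = S := inv_eq_left_inv hSM
  -- rewrite β
  have hB : q • Q₁ + Q₂ = q • A := by
    rw [hA, smul_add, smul_smul, mul_inv_cancel₀ hq.ne', one_smul]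
  have hBinv : (q • Q₁ + Q₂)⁻¹ = q⁻¹ • A⁻¹ := by
    rw [hB]
    refine inv_eq_left_inv ?_
    rw [smul_mul_assoc, mul_smul_comm, smul_smul, inv_mul_cancel₀ hq.ne', one_smul,
      nonsing_inv_mul _ hAd]
  have hβval : 1 + q - q * (d ⬝ᵥ ((q • Q₁ + Q₂)⁻¹ *ᵥ d)) = 1 + q - d ⬝ᵥ (A⁻¹ *ᵥ d) := by
    rw [hBinv, smul_mulVec, dotProduct_smul, smul_eq_mul, ← mul_assoc,
      mul_inv_cancel₀ hq.ne', one_mul]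
  rw [hβval] at hβ ⊢
  set b : ℝ := 1 + q - d ⬝ᵥ (A⁻¹ *ᵥ d) with hb
  have hQinv : (b • ((1 - L) * Q₁))⁻¹ = b⁻¹ • S := by
    refine inv_eq_left_inv ?_
    rw [smul_mul_assoc, mul_smul_comm, smul_smul, inv_mul_cancel₀ hβ.ne', one_smul, hSM]
  rw [hQinv]
  have hxa : x - (a₁ + L *ᵥ d) = u - L *ᵥ d := by rw [hu, sub_add_eq_sub_sub]
  rw [hxa, smul_mulVec, dotProduct_smul, smul_eq_mul, ← div_eq_inv_mul,
    div_le_one hβ]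
  -- now the quadratic form computation
  have hv : x - a₂ = u - d := by rw [hu, hd]; abel
  rw [hv] at h2
  have eSw : S *ᵥ (L *ᵥ d) = q • (P *ᵥ d) := by
    rw [mulVec_mulVec, hSL, smul_mulVec]
  have eLt : Lᵀ = A⁻¹ * Q₁ := by rw [hL, transpose_mul, hAinvt, hQ1t]
  have e4 : (L *ᵥ d) ⬝ᵥ (P *ᵥ d) = d ⬝ᵥ ((A⁻¹ * (Q₁ * P)) *ᵥ d) := by
    rw [← trans_dot L d (P *ᵥ d), eLt, mulVec_mulVec, mul_assoc]
  have e5 : q * ((L *ᵥ d) ⬝ᵥ (P *ᵥ d)) = q * (d ⬝ᵥ (P *ᵥ d)) - d ⬝ᵥ (A⁻¹ *ᵥ d) := by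
    rw [e4, ← smul_eq_mul, ← dotProduct_smul, ← smul_mulVec, key1, sub_mulVec,
      dotProduct_sub, smul_mulVec, dotProduct_smul, smul_eq_mul]
  have p1 : u ⬝ᵥ (S *ᵥ u) = u ⬝ᵥ (Q₁⁻¹ *ᵥ u) + q * (u ⬝ᵥ (P *ᵥ u)) := by
    rw [hS, add_mulVec, dotProduct_add, smul_mulVec, dotProduct_smul, smul_eq_mul]
  have main : (u - L *ᵥ d) ⬝ᵥ (S *ᵥ (u - L *ᵥ d)) =
      u ⬝ᵥ (Q₁⁻¹ *ᵥ u) + q * (u ⬝ᵥ (P *ᵥ u)) - 2 * (q * (u ⬝ᵥ (P *ᵥ d)))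
        + (q * (d ⬝ᵥ (P *ᵥ d)) - d ⬝ᵥ (A⁻¹ *ᵥ d)) := by
    rw [mulVec_sub, dotProduct_sub, sub_dotProduct, sub_dotProduct,
      symm_dot S hSt (L *ᵥ d) u, eSw, dotProduct_smul, dotProduct_smul, smul_eq_mul,
      smul_eq_mul, p1, e5]
    ring
  have expand2 : (u - d) ⬝ᵥ (P *ᵥ (u - d)) =
      u ⬝ᵥ (P *ᵥ u) - 2 * (u ⬝ᵥ (P *ᵥ d)) + d ⬝ᵥ (P *ᵥ d) := by
    rw [mulVec_sub, dotProduct_sub, sub_dotProduct, sub_dotProduct, symm_dot P hPt d u]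
    ring
  have h2' : u ⬝ᵥ (P *ᵥ u) - 2 * (u ⬝ᵥ (P *ᵥ d)) + d ⬝ᵥ (P *ᵥ d) ≤ 1 := by
    rw [← expand2]; exact h2
  have h2q := mul_le_mul_of_nonneg_left h2' hq.le
  rw [hb]
  linarith [main, h1, h2q]
end
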